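/- Let φ(w) = 2w + 5/w, ψ(z) = (z² − 3z)/(3z − 1), and f(z) = I·√5·(z − 1)/(1 + z) for complex arguments, where √5 denotes the positive real square root of 5. Then for every z ∈ ℂ such that 1 + z ≠ 0, 3z − 1 ≠ 0, f(z) ≠ 0, and 1 + ψ(z) ≠ 0, one has φ(f(z)) = f(ψ(z)). (That is, f⁻¹ ∘ φ ∘ f = ψ as rational self-maps of ℙ¹(ℂ), so φ and ψ are ℚ-twists of each other.) -/

import Mathlib

noncomputable def phiTwist (w : ℂ) : ℂ := 2 * w + 5 / w

noncomputable def psiTwist (z : ℂ) : ℂ := (z ^ 2 - 3 * z) / (3 * z - 1)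

noncomputable def fTwist (z : ℂ) : ℂ :=
  Complex.I * (Real.sqrt 5 : ℂ) * (z - 1) / (1 + z)

theorem twist_conjugacy (z : ℂ) (h1 : 1 + z ≠ 0) (h2 : 3 * z - 1 ≠ 0)
    (h3 : fTwist z ≠ 0) (h4 : 1 + psiTwist z ≠ 0) :
    phiTwist (fTwist z) = fTwist (psiTwist z) := by
  have hz1 : z - 1 ≠ 0 := by
    intro h
    apply h3
    simp [fTwist, h]
  have hs : (Real.sqrt 5 : ℂ) ^ 2 = 5 := by
    norm_cast
    rw [Real.sq_sqrt] ; norm_num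
  have hI : Complex.I ^ 2 = -1 := Complex.I_sq
  have h5 : (Real.sqrt 5 : ℂ) ≠ 0 := by
    simp only [ne_eq, Complex.ofReal_eq_zero]
    positivity
  have hIne : Complex.I ≠ 0 := Complex.I_ne_zero
  unfold phiTwist psiTwist fTwist at *
  field_simp at h4 ⊢
  have h2' : z * 3 - 1 ≠ 0 := by rw [mul_comm]; exact h2
  rw [hI, hs]
  field_simp
  ring
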